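/- Let G be a finite group all of whose nontrivial elements have exactly two 'poles' among a finite set 𝒫 on which G acts, such that counting pairs (g, B) with g ∈ G ∖ {id} and B a fixed point of g in 𝒫 yields: if G has N ≥ 2 elements and the action partitions 𝒫 into K orbits of sizes μ₁ ≤ … ≤ μ_K, then Σᵢ 1/γᵢ = K − 2 + 2/N where γᵢ = N/μᵢ ≥ 2 for all i. Under these constraints, either K = 2 and μ₁ = μ₂ = 1, or K = 3 and the orbit size multiset is one of [2, N/2, N/2], [4,4,6] (with N = 12), [6,8,12] (with N = 24), or [12,20,30] (with N = 60). -/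

import Mathlib

open MulAction

private lemma arithSorted (N a b c p q r : ℕ)
    (hab : a ≤ b) (hbc : b ≤ c)
    (hp : 2 ≤ p) (hq : 2 ≤ q) (hr : 2 ≤ r)
    (hap : a * p = N) (hbq : b * q = N) (hcr : c * r = N)
    (hsum : a + b + c = N + 2) (hN2 : 2 ≤ N) :
    (a = 2 ∧ b = c ∧ N = 2 * c) ∨ (N = 12 ∧ a = 4 ∧ b = 4 ∧ c = 6) ∨
    (N = 24 ∧ a = 6 ∧ b = 8 ∧ c = 12) ∨ (N = 60 ∧ a = 12 ∧ b = 20 ∧ c = 30) := by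
  have ha1 : 1 ≤ a := by nlinarith
  have hr2 : r = 2 := by
    by_contra h
    have hr3 : 3 ≤ r := by omega
    nlinarith
  subst hr2
  have hq3 : q ≤ 3 := by nlinarith
  interval_cases q
  · left; omega
  · have hp5 : p ≤ 5 := by nlinarith
    interval_cases p <;> omega

private lemma buildCases (N x y z : ℕ)
    (h : (x = 2 ∧ y = z ∧ N = 2 * z) ∨ (N = 12 ∧ x = 4 ∧ y = 4 ∧ z = 6) ∨
         (N = 24 ∧ x = 6 ∧ y = 8 ∧ z = 12) ∨ (N = 60 ∧ x = 12 ∧ y = 20 ∧ z = 30)) :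
    ({x, y, z} : Multiset ℕ) = {2, N / 2, N / 2} ∨
    (N = 12 ∧ ({x, y, z} : Multiset ℕ) = {4, 4, 6}) ∨
    (N = 24 ∧ ({x, y, z} : Multiset ℕ) = {6, 8, 12}) ∨
    (N = 60 ∧ ({x, y, z} : Multiset ℕ) = {12, 20, 30}) := by
  rcases h with ⟨h1, h2, h3⟩ | ⟨h1, h2, h3, h4⟩ | ⟨h1, h2, h3, h4⟩ | ⟨h1, h2, h3, h4⟩ <;>
    subst_vars
  · left
    have h : 2 * z / 2 = z := by omega
    rw [h]
  · exact Or.inr (Or.inl ⟨rfl, rfl⟩)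
  · exact Or.inr (Or.inr (Or.inl ⟨rfl, rfl⟩))
  · exact Or.inr (Or.inr (Or.inr ⟨rfl, rfl⟩))

theorem stmt12 (G : Type*) [Group G] [Fintype G] (P : Type*) [Fintype P] [MulAction G P]
    (N : ℕ) (hN : N = Fintype.card G) (hN2 : 2 ≤ N)
    (hfix : ∀ g : G, g ≠ 1 → Nat.card {x : P // g • x = x} = 2)
    (hcov : ∀ x : P, ∃ g : G, g ≠ 1 ∧ g • x = x) :
    (Nat.card (MulAction.orbitRel.Quotient G P) = 2 ∧
      ∀ o : MulAction.orbitRel.Quotient G P, Nat.card o.orbit = 1) ∨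
    (Nat.card (MulAction.orbitRel.Quotient G P) = 3 ∧
      ∃ o₁ o₂ o₃ : MulAction.orbitRel.Quotient G P, o₁ ≠ o₂ ∧ o₁ ≠ o₃ ∧ o₂ ≠ o₃ ∧
        (({Nat.card o₁.orbit, Nat.card o₂.orbit, Nat.card o₃.orbit} : Multiset ℕ)
            = {2, N / 2, N / 2} ∨
         (N = 12 ∧ ({Nat.card o₁.orbit, Nat.card o₂.orbit, Nat.card o₃.orbit} : Multiset ℕ)
            = {4, 4, 6}) ∨
         (N = 24 ∧ ({Nat.card o₁.orbit, Nat.card o₂.orbit, Nat.card o₃.orbit} : Multiset ℕ)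
            = {6, 8, 12}) ∨
         (N = 60 ∧ ({Nat.card o₁.orbit, Nat.card o₂.orbit, Nat.card o₃.orbit} : Multiset ℕ)
            = {12, 20, 30}))) := by
  classical
  -- Burnside's lemma
  have hb : (∑ g : G, Fintype.card (fixedBy P g)) =
      Fintype.card (MulAction.orbitRel.Quotient G P) * N := by
    rw [hN]
    exact sum_card_fixedBy_eq_card_orbits_mul_card_group G P
  have h1 : ∀ g : G, g ≠ 1 → Fintype.card (fixedBy P g) = 2 := by
    intro g hg
    rw [← Nat.card_eq_fintype_card]
    exact hfix g hg
  have hone : Fintype.card (fixedBy P (1 : G)) = Fintype.card P := by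
    rw [Fintype.card_of_subtype Finset.univ (fun x => by simp [MulAction.mem_fixedBy])]
    exact Finset.card_univ
  have hsum : Fintype.card P + 2 * (N - 1) =
      Fintype.card (MulAction.orbitRel.Quotient G P) * N := by
    rw [← hb, ← Finset.add_sum_erase Finset.univ _ (Finset.mem_univ (1 : G)), hone]
    congr 1
    rw [Finset.sum_congr rfl (fun g hg => h1 g (Finset.ne_of_mem_erase hg)),
      Finset.sum_const, Finset.card_erase_of_mem (Finset.mem_univ _), Finset.card_univ, ← hN]
    simp [mul_comm]
  -- orbit decomposition
  have hP : Fintype.card P = ∑ o : MulAction.orbitRel.Quotient G P, Nat.card o.orbit := by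
    rw [Fintype.card_congr (selfEquivSigmaOrbits' G P), Fintype.card_sigma]
    exact Finset.sum_congr rfl fun o _ => (Nat.card_eq_fintype_card).symm
  -- stabilizer data
  have key : ∀ o : MulAction.orbitRel.Quotient G P,
      ∃ γ : ℕ, 2 ≤ γ ∧ Nat.card o.orbit * γ = N := by
    intro o
    have horb : o.orbit = MulAction.orbit G (Quotient.out o) :=
      orbitRel.Quotient.orbit_eq_orbit_out o Quotient.out_eq'
    refine ⟨Nat.card (stabilizer G (Quotient.out o)), ?_, ?_⟩
    · obtain ⟨g, hg1, hgx⟩ := hcov (Quotient.out o)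
      have hnt : Nontrivial (stabilizer G (Quotient.out o)) :=
        ⟨⟨g, hgx⟩, 1, fun h => hg1 (by simpa [Subtype.ext_iff] using h)⟩
      exact Finite.one_lt_card_iff_nontrivial.mpr hnt
    · rw [horb, Nat.card_eq_fintype_card, Nat.card_eq_fintype_card, hN]
      exact card_orbit_mul_card_stabilizer_eq_card_group G (Quotient.out o)
  have hm1 : ∀ o : MulAction.orbitRel.Quotient G P, 1 ≤ Nat.card o.orbit := by
    intro o
    obtain ⟨γ, hγ, h⟩ := key o
    rcases Nat.eq_zero_or_pos (Nat.card o.orbit) with h0 | h0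
    · rw [h0, zero_mul] at h; omega
    · exact h0
  have hmN : ∀ o : MulAction.orbitRel.Quotient G P, 2 * Nat.card o.orbit ≤ N := by
    intro o
    obtain ⟨γ, hγ, h⟩ := key o
    nlinarith [hm1 o]
  have hKle : Fintype.card (MulAction.orbitRel.Quotient G P) ≤ Fintype.card P := by
    rw [hP]
    calc Fintype.card (MulAction.orbitRel.Quotient G P)
        = ∑ _o : MulAction.orbitRel.Quotient G P, 1 := by simp
      _ ≤ ∑ o : MulAction.orbitRel.Quotient G P, Nat.card o.orbit :=
          Finset.sum_le_sum fun o _ => hm1 o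
  have hPle : 2 * Fintype.card P ≤ Fintype.card (MulAction.orbitRel.Quotient G P) * N := by
    rw [hP, Finset.mul_sum]
    calc ∑ o : MulAction.orbitRel.Quotient G P, 2 * Nat.card o.orbit
        ≤ ∑ _o : MulAction.orbitRel.Quotient G P, N := Finset.sum_le_sum fun o _ => hmN o
      _ = Fintype.card (MulAction.orbitRel.Quotient G P) * N := by
          rw [Finset.sum_const, Finset.card_univ, smul_eq_mul]
  have hK4 : Fintype.card (MulAction.orbitRel.Quotient G P) ≤ 3 := by
    by_contra h
    push_neg at h
    have h4N : 4 * N ≤ Fintype.card (MulAction.orbitRel.Quotient G P) * N :=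
      Nat.mul_le_mul_right N (by omega)
    omega
  have hK2 : 2 ≤ Fintype.card (MulAction.orbitRel.Quotient G P) := by
    by_contra h
    push_neg at h
    have h01 : Fintype.card (MulAction.orbitRel.Quotient G P) = 0 ∨
        Fintype.card (MulAction.orbitRel.Quotient G P) = 1 := by omega
    rcases h01 with h0 | h0 <;> rw [h0] at hsum hKle <;> omega
  have hK23 : Fintype.card (MulAction.orbitRel.Quotient G P) = 2 ∨
      Fintype.card (MulAction.orbitRel.Quotient G P) = 3 := by omega
  rcases hK23 with hK | hK
  · -- two orbits
    left
    refine ⟨by rw [Nat.card_eq_fintype_card, hK], fun o => ?_⟩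
    rw [hK] at hsum
    have hPcard : Fintype.card P = 2 := by omega
    have h : (∑ o' ∈ Finset.univ.erase o, Nat.card o'.orbit) + Nat.card o.orbit = 2 := by
      rw [Finset.sum_erase_add Finset.univ _ (Finset.mem_univ o), ← hP, hPcard]
    have hge : 1 ≤ ∑ o' ∈ Finset.univ.erase o, Nat.card o'.orbit := by
      calc (1 : ℕ) = Finset.card (Finset.univ.erase o) := by
            rw [Finset.card_erase_of_mem (Finset.mem_univ _), Finset.card_univ, hK]
        _ = ∑ _o' ∈ Finset.univ.erase o, 1 := by rw [Finset.sum_const, smul_eq_mul, mul_one]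
        _ ≤ ∑ o' ∈ Finset.univ.erase o, Nat.card o'.orbit :=
            Finset.sum_le_sum fun o' _ => hm1 o'
    have := hm1 o
    omega
  · -- three orbits
    right
    refine ⟨by rw [Nat.card_eq_fintype_card, hK], ?_⟩
    rw [hK] at hsum
    have hPcard : Fintype.card P = N + 2 := by omega
    let e : MulAction.orbitRel.Quotient G P ≃ Fin 3 := Fintype.equivFinOfCardEq hK
    obtain ⟨pa, hpa2, hpa⟩ := key (e.symm 0)
    obtain ⟨pb, hpb2, hpb⟩ := key (e.symm 1)
    obtain ⟨pc, hpc2, hpc⟩ := key (e.symm 2)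
    set a := Nat.card (e.symm 0).orbit with ha
    set b := Nat.card (e.symm 1).orbit with hb'
    set c := Nat.card (e.symm 2).orbit with hc'
    have habc : a + b + c = N + 2 := by
      rw [← hPcard, hP, Fintype.sum_equiv e (fun o => Nat.card o.orbit)
        (fun i => Nat.card (e.symm i).orbit) (fun o => by simp),
        Fin.sum_univ_three]
    have hne01 : e.symm 0 ≠ e.symm 1 := e.symm.injective.ne (by decide)
    have hne02 : e.symm 0 ≠ e.symm 2 := e.symm.injective.ne (by decide)
    have hne12 : e.symm 1 ≠ e.symm 2 := e.symm.injective.ne (by decide)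
    rcases le_total a b with h1 | h1 <;> rcases le_total b c with h2 | h2 <;>
      rcases le_total a c with h3 | h3
    · exact ⟨e.symm 0, e.symm 1, e.symm 2, hne01, hne02, hne12,
        buildCases N a b c (arithSorted N a b c pa pb pc h1 h2 hpa2 hpb2 hpc2
          hpa hpb hpc habc hN2)⟩
    · exact ⟨e.symm 0, e.symm 1, e.symm 2, hne01, hne02, hne12,
        buildCases N a b c (arithSorted N a b c pa pb pc h1 h2 hpa2 hpb2 hpc2
          hpa hpb hpc habc hN2)⟩
    · exact ⟨e.symm 0, e.symm 2, e.symm 1, hne02, hne01, hne12.symm,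
        buildCases N a c b (arithSorted N a c b pa pc pb h3 h2 hpa2 hpc2 hpb2
          hpa hpc hpb (by omega) hN2)⟩
    · exact ⟨e.symm 2, e.symm 0, e.symm 1, hne02.symm, hne12.symm, hne01,
        buildCases N c a b (arithSorted N c a b pc pa pb h3 h1 hpc2 hpa2 hpb2
          hpc hpa hpb (by omega) hN2)⟩
    · exact ⟨e.symm 1, e.symm 0, e.symm 2, hne01.symm, hne12, hne02,
        buildCases N b a c (arithSorted N b a c pb pa pc h1 h3 hpb2 hpa2 hpc2
          hpb hpa hpc (by omega) hN2)⟩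
    · exact ⟨e.symm 1, e.symm 2, e.symm 0, hne12, hne01.symm, hne02.symm,
        buildCases N b c a (arithSorted N b c a pb pc pa h2 h3 hpb2 hpc2 hpa2
          hpb hpc hpa (by omega) hN2)⟩
    · exact ⟨e.symm 2, e.symm 1, e.symm 0, hne12.symm, hne02.symm, hne01.symm,
        buildCases N c b a (arithSorted N c b a pc pb pa h2 h1 hpc2 hpb2 hpa2
          hpc hpb hpa (by omega) hN2)⟩
    · exact ⟨e.symm 2, e.symm 1, e.symm 0, hne12.symm, hne02.symm, hne01.symm,
        buildCases N c b a (arithSorted N c b a pc pb pa h2 h1 hpc2 hpb2 hpa2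
          hpc hpb hpa (by omega) hN2)⟩
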